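/- arXiv:1102.0862 — 3 statements merged into one kernel-verified Lean document; each statement's English description precedes it below -/
import Mathlib

section
/- Polarized factorization: let α be a PBR on (X,Y). Define δ_α as the right polarized idempotent on (X,X) whose edges are those of ε_X together with the edges (x^(d),x'^(d)) for (x,x') ∈ α₁₁; define γ_α as the pure PBR on (X,Y) with (γ_α)₁₂ = α₁₂ and (γ_α)₂₁ = α₂₁; define β_α as the left polarized idempotent on (Y,Y) whose edges are those of ε_Y together with the edges (y^(c),y'^(c)) for (y,y') ∈ α₂₂. Then α = β_α∘γ_α∘δ_α, and this factorization is unique: if α = β∘γ∘δ where β is a left polarized idempotent on (Y,Y), γ is a pure PBR on (X,Y) and δ is a right polarized idempotent on (X,X), then β = β_α, γ = γ_α and δ = δ_α. -/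
namespace PBRPaper

/-- A partitioned binary relation (PBR) on `(X, Y)`: a binary relation on
the disjoint union `X ⊕ Y`. -/
abbrev PBR (X Y : Type) : Type := Set ((X ⊕ Y) × (X ⊕ Y))

variable {X Y Z : Type}

/-- The inclusion of `X ⊕ Y` into `X ⊕ Y ⊕ Z`. -/
def ι₁ : X ⊕ Y → X ⊕ Y ⊕ Z := Sum.elim Sum.inl fun y => Sum.inr (Sum.inl y)

/-- The inclusion of `Y ⊕ Z` into `X ⊕ Y ⊕ Z`. -/
def ι₂ : Y ⊕ Z → X ⊕ Y ⊕ Z :=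
  Sum.elim (fun y => Sum.inr (Sum.inl y)) fun z => Sum.inr (Sum.inr z)

/-- The inclusion of `X ⊕ Z` into `X ⊕ Y ⊕ Z`. -/
def ι₀ : X ⊕ Z → X ⊕ Y ⊕ Z := Sum.elim Sum.inl fun z => Sum.inr (Sum.inr z)

/-- Labeled edges in the ambient `X ⊕ Y ⊕ Z`: label `false` means
"an edge of `α`", label `true` means "an edge of `β`". -/
def EdgeMem (α : PBR X Y) (β : PBR Y Z)
    (e : Bool × (X ⊕ Y ⊕ Z) × (X ⊕ Y ⊕ Z)) : Prop :=
  if e.1 then ∃ p ∈ β, ι₂ p.1 = e.2.1 ∧ ι₂ p.2 = e.2.2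
  else ∃ p ∈ α, ι₁ p.1 = e.2.1 ∧ ι₁ p.2 = e.2.2

/-- An `(α,β)`-connected sequence: a nonempty list of labeled edges of `α`/`β`,
no two successive edges from the same PBR, endpoints matching up. -/
def IsConnSeq (α : PBR X Y) (β : PBR Y Z)
    (L : List (Bool × (X ⊕ Y ⊕ Z) × (X ⊕ Y ⊕ Z))) : Prop :=
  L ≠ [] ∧ (∀ e ∈ L, EdgeMem α β e) ∧
    L.Chain' fun e f => e.1 ≠ f.1 ∧ e.2.2 = f.2.1

/-- `L` is an `(α,β)`-connected sequence connecting `a` to `b`. -/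
def ConnectsVia (α : PBR X Y) (β : PBR Y Z)
    (L : List (Bool × (X ⊕ Y ⊕ Z) × (X ⊕ Y ⊕ Z))) (a b : X ⊕ Z) : Prop :=
  IsConnSeq α β L ∧ L.head?.map (fun e => e.2.1) = some (ι₀ a) ∧
    L.getLast?.map (fun e => e.2.2) = some (ι₀ b)

/-- Composition of partitioned binary relations. -/
def comp (β : PBR Y Z) (α : PBR X Y) : PBR X Z :=
  {p | ∃ L, ConnectsVia α β L p.1 p.2}

/-- The identity PBR `ε_X`, consisting of all edges `(x^(d), x^(c))`
and `(x^(c), x^(d))`. -/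
def eps (X : Type) : PBR X X :=
  {p | ∃ x : X, p = (Sum.inl x, Sum.inr x) ∨ p = (Sum.inr x, Sum.inl x)}

/-- A labeled edge is `(α,β)`-frothy if it is an edge of the corresponding PBR
occurring in no `(α,β)`-connected sequence connecting two elements of `X ⊕ Z`. -/
def IsFrothy (α : PBR X Y) (β : PBR Y Z)
    (e : Bool × (X ⊕ Y ⊕ Z) × (X ⊕ Y ⊕ Z)) : Prop :=
  EdgeMem α β e ∧ ∀ L a b, ConnectsVia α β L a b → e ∉ L

/-- An `(α,β)`-frothy cycle. -/
def IsFrothyCycle (α : PBR X Y) (β : PBR Y Z)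
    (L : List (Bool × (X ⊕ Y ⊕ Z) × (X ⊕ Y ⊕ Z))) : Prop :=
  IsConnSeq α β L ∧ 2 ≤ L.length ∧
    L.getLast?.map (fun e => e.2.2) = L.head?.map (fun e => e.2.1) ∧
    L.head?.map (fun e => e.1) ≠ L.getLast?.map (fun e => e.1) ∧
    ∀ e ∈ L, IsFrothy α β e

/-- The type of `(α,β)`-frothy cycles. -/
def FrothyCycles (α : PBR X Y) (β : PBR Y Z) :=
  {L : List (Bool × (X ⊕ Y ⊕ Z) × (X ⊕ Y ⊕ Z)) // IsFrothyCycle α β L}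

/-- `𝔣((α,β))`: the number of equivalence classes of `(α,β)`-frothy cycles,
where the equivalence is generated by elementary equivalence (sharing a common
edge of the same PBR); note that naive equivalence (cyclic permutation) is
subsumed, since a cycle and any of its cyclic permutations share all edges. -/
noncomputable def fPBR (α : PBR X Y) (β : PBR Y Z) : ℕ :=
  Nat.card (Quot fun L L' : FrothyCycles α β => ∃ e, e ∈ L.1 ∧ e ∈ L'.1)

variable {X Y : Type} in
/-- A PBR is pure if every edge has one endpoint in the domain copy of `X` and
the other in the codomain copy of `Y` (in either order). -/
def IsPure (α : PBR X Y) : Prop :=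
  ∀ p ∈ α, (∃ (x : X) (y : Y), p = (Sum.inl x, Sum.inr y)) ∨
    ∃ (y : Y) (x : X), p = (Sum.inr y, Sum.inl x)

variable {X : Type} in
/-- A left polarized idempotent: a PBR on `(X,X)` containing all edges of
`ε_X`, any other edge joining two elements of the codomain copy. -/
def IsLeftPol (α : PBR X X) : Prop :=
  eps X ⊆ α ∧ ∀ p ∈ α, p ∈ eps X ∨ ∃ y y' : X, p = (Sum.inr y, Sum.inr y')

variable {X : Type} in
/-- A right polarized idempotent: a PBR on `(X,X)` containing all edges of
`ε_X`, any other edge joining two elements of the domain copy. -/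
def IsRightPol (α : PBR X X) : Prop :=
  eps X ⊆ α ∧ ∀ p ∈ α, p ∈ eps X ∨ ∃ x x' : X, p = (Sum.inl x, Sum.inl x')

variable {X Y : Type} in
/-- The right polarized idempotent `δ_α`: `ε_X` together with the
domain-domain edges of `α`. -/
def deltaP (α : PBR X Y) : PBR X X :=
  eps X ∪ {p | ∃ x x' : X, (Sum.inl x, Sum.inl x') ∈ α ∧ p = (Sum.inl x, Sum.inl x')}

variable {X Y : Type} in
/-- The pure part `γ_α` of `α`: the edges of `α` joining the domain copy of
`X` and the codomain copy of `Y`. -/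
def gammaP (α : PBR X Y) : PBR X Y :=
  {p | p ∈ α ∧ ((∃ (x : X) (y : Y), p = (Sum.inl x, Sum.inr y)) ∨
    ∃ (y : Y) (x : X), p = (Sum.inr y, Sum.inl x))}

variable {X Y : Type} in
/-- The left polarized idempotent `β_α`: `ε_Y` together with the
codomain-codomain edges of `α`. -/
def betaP (α : PBR X Y) : PBR Y Y :=
  eps Y ∪ {p | ∃ y y' : Y, (Sum.inr y, Sum.inr y') ∈ α ∧ p = (Sum.inr y, Sum.inr y')}

section Aux

variable {X Y Z : Type}

/-- No three consecutive edges are possible under the shape hypotheses. -/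
lemma no_three {α : PBR X Y} {β : PBR Y Z}
    (hα : ∀ (y y' : Y), ((Sum.inr y, Sum.inr y') : (X ⊕ Y) × (X ⊕ Y)) ∉ α)
    (hβ : ∀ (y y' : Y), ((Sum.inl y, Sum.inl y') : (Y ⊕ Z) × (Y ⊕ Z)) ∉ β)
    (e f g : Bool × (X ⊕ Y ⊕ Z) × (X ⊕ Y ⊕ Z))
    (he : EdgeMem α β e) (hf : EdgeMem α β f) (hg : EdgeMem α β g)
    (h1 : e.1 ≠ f.1) (h2 : e.2.2 = f.2.1) (h3 : f.1 ≠ g.1) (h4 : f.2.2 = g.2.1)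
    (ha : ∃ a : X ⊕ Z, e.2.1 = ι₀ a) : False := by
  obtain ⟨eb, eu, ev⟩ := e
  obtain ⟨fb, fu, fv⟩ := f
  obtain ⟨gb, gu, gv⟩ := g
  obtain ⟨a, ha⟩ := ha
  simp only at h1 h2 h3 h4
  cases eb
  · -- e is an α-edge; f is a β-edge; g is an α-edge
    cases fb
    · exact h1 rfl
    cases gb
    swap
    · exact h3 rfl
    simp only [EdgeMem, if_true, if_false, Bool.false_eq_true, if_neg] at he hf hg
    obtain ⟨p, hp, hp1, hp2⟩ := he
    obtain ⟨q, hq, hq1, hq2⟩ := hf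
    obtain ⟨r, hr, hr1, hr2⟩ := hg
    subst h2 h4
    -- ι₁ p.2 = ι₂ q.1 forces q.1 = inl y; then q.2 = inr z; then ι₁ r.1 = inr (inr z): absurd
    rw [← hp2] at hq1
    rw [← hq2] at hr1
    rcases q with ⟨q1, q2⟩
    rcases q1 with y | z
    · rcases q2 with y' | z'
      · exact hβ y y' hq
      · rcases r with ⟨r1, r2⟩
        rcases r1 with x | y' <;> simp [ι₁, ι₂] at hr1
    · rcases p with ⟨p1, p2⟩
      rcases p2 with x | y <;> simp [ι₁, ι₂] at hq1
  · -- e is a β-edge; f is an α-edge; g is a β-edge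
    cases fb
    swap
    · exact h1 rfl
    cases gb
    · exact h3 rfl
    simp only [EdgeMem, if_true, if_false, Bool.false_eq_true, if_neg] at he hf hg
    obtain ⟨q, hq, hq1, hq2⟩ := he
    obtain ⟨p, hp, hp1, hp2⟩ := hf
    obtain ⟨s, hs, hs1, hs2⟩ := hg
    subst h2 h4
    rw [← hq2] at hp1
    rw [← hp2] at hs1
    rcases p with ⟨p1, p2⟩
    rcases p1 with x | y
    · rcases q with ⟨q1, q2⟩
      rcases q2 with y | z <;> simp [ι₁, ι₂] at hp1
    · rcases p2 with x | y'
      · rcases s with ⟨s1, s2⟩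
        rcases s1 with y'' | z <;> simp [ι₁, ι₂] at hs1
      · exact hα y y' hp

/-- Characterization of composition under the shape hypotheses:
`α` has no codomain-codomain edges and `β` has no domain-domain edges. -/
lemma comp_eq {α : PBR X Y} {β : PBR Y Z}
    (hα : ∀ (y y' : Y), ((Sum.inr y, Sum.inr y') : (X ⊕ Y) × (X ⊕ Y)) ∉ α)
    (hβ : ∀ (y y' : Y), ((Sum.inl y, Sum.inl y') : (Y ⊕ Z) × (Y ⊕ Z)) ∉ β) :
    comp β α = {p : (X ⊕ Z) × (X ⊕ Z) |
      (∃ x x', p = (Sum.inl x, Sum.inl x') ∧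
        ((Sum.inl x, Sum.inl x') : (X ⊕ Y) × (X ⊕ Y)) ∈ α) ∨
      (∃ z z', p = (Sum.inr z, Sum.inr z') ∧
        ((Sum.inr z, Sum.inr z') : (Y ⊕ Z) × (Y ⊕ Z)) ∈ β) ∨
      (∃ x z y, p = (Sum.inl x, Sum.inr z) ∧
        ((Sum.inl x, Sum.inr y) : (X ⊕ Y) × (X ⊕ Y)) ∈ α ∧
        ((Sum.inl y, Sum.inr z) : (Y ⊕ Z) × (Y ⊕ Z)) ∈ β) ∨
      (∃ z x y, p = (Sum.inr z, Sum.inl x) ∧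
        ((Sum.inr z, Sum.inl y) : (Y ⊕ Z) × (Y ⊕ Z)) ∈ β ∧
        ((Sum.inr y, Sum.inl x) : (X ⊕ Y) × (X ⊕ Y)) ∈ α)} := by
  ext ⟨a, b⟩
  constructor
  · rintro ⟨L, ⟨hne, hmem, hch⟩, hh, hl⟩
    match L with
    | [] => exact absurd rfl hne
    | [e] =>
      simp only [List.head?, List.getLast?, Option.map_some] at hh hl
      obtain ⟨eb, eu, ev⟩ := e
      have he := hmem _ (List.mem_singleton.2 rfl)
      simp only [Option.some.injEq] at hh hl
      cases eb
      · simp only [EdgeMem, Bool.false_eq_true, if_neg, if_false] at he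
        obtain ⟨⟨p1, p2⟩, hp, hp1, hp2⟩ := he
        left
        rcases p1 with x | y
        · rcases p2 with x' | y'
          · refine ⟨x, x', ?_, hp⟩
            rcases a with xa | za <;> rcases b with xb | zb <;>
              simp_all [ι₀, ι₁]
          · exfalso; rcases b with xb | zb <;> simp_all [ι₀, ι₁]
        · exfalso; rcases a with xa | za <;> simp_all [ι₀, ι₁]
      · simp only [EdgeMem, if_true] at he
        obtain ⟨⟨q1, q2⟩, hq, hq1, hq2⟩ := he
        right; left
        rcases q1 with y | z
        · exfalso; rcases a with xa | za <;> simp_all [ι₀, ι₂]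
        · rcases q2 with y' | z'
          · exfalso; rcases b with xb | zb <;> simp_all [ι₀, ι₂]
          · refine ⟨z, z', ?_, hq⟩
            rcases a with xa | za <;> rcases b with xb | zb <;>
              simp_all [ι₀, ι₂]
    | [e, f] =>
      obtain ⟨eb, eu, ev⟩ := e
      obtain ⟨fb, fu, fv⟩ := f
      have he := hmem (eb, eu, ev) (by simp)
      have hf := hmem (fb, fu, fv) (by simp)
      simp only [List.head?, Option.map_some, Option.some.injEq] at hh
      have hl' : fv = ι₀ b := by
        simp only [List.getLast?, Option.map_some, Option.some.injEq] at hl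
        exact hl
      simp only [List.Chain', List.isChain_cons_cons] at hch
      obtain ⟨⟨hne1, heq1⟩, -⟩ := hch
      subst hh
      subst hl'
      cases eb
      · cases fb
        · exact absurd rfl hne1
        -- α-edge then β-edge
        simp only [EdgeMem, Bool.false_eq_true, if_false, if_true] at he hf
        obtain ⟨⟨p1, p2⟩, hp, hp1, hp2⟩ := he
        obtain ⟨⟨q1, q2⟩, hq, hq1, hq2⟩ := hf
        have key : ι₂ q1 = ι₁ p2 := by rw [hq1, ← heq1, hp2]
        rcases p1 with x | y
        swap
        · exfalso; rcases a with xa | za <;> simp [ι₀, ι₁] at hp1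
        rcases q2 with y' | z
        · exfalso; rcases b with xb | zb <;> simp [ι₀, ι₂] at hq2
        rcases p2 with x' | y
        · exfalso; rcases q1 with y' | z' <;> simp [ι₁, ι₂] at key
        rcases q1 with y' | z'
        swap
        · exfalso; simp [ι₁, ι₂] at key
        have hyy : y' = y := by simpa [ι₁, ι₂] using key
        subst hyy
        right; right; left
        refine ⟨x, z, y', ?_, hp, hq⟩
        have hax : a = Sum.inl x := by
          rcases a with xa | za <;> simp_all [ι₀, ι₁, ι₂]
        have hbz : b = Sum.inr z := by
          rcases b with xb | zb <;> simp_all [ι₀, ι₁, ι₂]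
        rw [hax, hbz]
      · cases fb
        swap
        · exact absurd rfl hne1
        -- β-edge then α-edge
        simp only [EdgeMem, Bool.false_eq_true, if_false, if_true] at he hf
        obtain ⟨⟨q1, q2⟩, hq, hq1, hq2⟩ := he
        obtain ⟨⟨p1, p2⟩, hp, hp1, hp2⟩ := hf
        have key : ι₁ p1 = ι₂ q2 := by rw [hp1, ← heq1, hq2]
        rcases q1 with y | z
        · exfalso; rcases a with xa | za <;> simp [ι₀, ι₂] at hq1
        rcases p2 with x | y
        swap
        · exfalso; rcases b with xb | zb <;> simp [ι₀, ι₁] at hp2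
        rcases q2 with y' | z'
        swap
        · exfalso; rcases p1 with x' | y <;> simp [ι₁, ι₂] at key
        rcases p1 with x' | y
        · exfalso; simp [ι₁, ι₂] at key
        have hyy : y = y' := by simpa [ι₁, ι₂] using key
        subst hyy
        right; right; right
        refine ⟨z, x, y, ?_, hq, hp⟩
        have haz : a = Sum.inr z := by
          rcases a with xa | za <;> simp_all [ι₀, ι₁, ι₂]
        have hbx : b = Sum.inl x := by
          rcases b with xb | zb <;> simp_all [ι₀, ι₁, ι₂]
        rw [haz, hbx]
    | e :: f :: g :: rest =>
      exfalso
      simp only [List.Chain', List.isChain_cons_cons] at hch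
      obtain ⟨⟨h1, h2⟩, ⟨h3, h4⟩, -⟩ := hch
      have he := hmem e (by simp)
      have hf := hmem f (by simp)
      have hg := hmem g (by simp)
      have ha : ∃ a : X ⊕ Z, e.2.1 = ι₀ a := by
        refine ⟨a, ?_⟩
        simpa using hh
      exact no_three hα hβ e f g he hf hg h1 h2 h3 h4 ha
  · have efalse : ∀ (p : (X ⊕ Y) × (X ⊕ Y)), p ∈ α →
        EdgeMem α β (false, ι₁ p.1, ι₁ p.2) := by
      intro p hp
      simp only [EdgeMem, Bool.false_eq_true, if_false]
      exact ⟨p, hp, rfl, rfl⟩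
    have etrue : ∀ (p : (Y ⊕ Z) × (Y ⊕ Z)), p ∈ β →
        EdgeMem α β (true, ι₂ p.1, ι₂ p.2) := by
      intro p hp
      simp only [EdgeMem, if_true]
      exact ⟨p, hp, rfl, rfl⟩
    rintro (⟨x, x', hab, hm⟩ | ⟨z, z', hab, hm⟩ | ⟨x, z, y, hab, hm1, hm2⟩ |
      ⟨z, x, y, hab, hm1, hm2⟩) <;>
      rw [Prod.mk.injEq] at hab <;> obtain ⟨rfl, rfl⟩ := hab
    · refine ⟨[(false, Sum.inl x, Sum.inl x')], ⟨by simp, ?_, by simp [List.Chain']⟩,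
        by simp [ι₀], by simp [ι₀]⟩
      intro e he
      rw [List.mem_singleton] at he
      subst he
      exact efalse (Sum.inl x, Sum.inl x') hm
    · refine ⟨[(true, Sum.inr (Sum.inr z), Sum.inr (Sum.inr z'))], ⟨by simp, ?_, by simp [List.Chain']⟩,
        by simp [ι₀], by simp [ι₀]⟩
      intro e he
      rw [List.mem_singleton] at he
      subst he
      exact etrue (Sum.inr z, Sum.inr z') hm
    · refine ⟨[(false, Sum.inl x, Sum.inr (Sum.inl y)),
        (true, Sum.inr (Sum.inl y), Sum.inr (Sum.inr z))],
        ⟨by simp, ?_, by simp [List.Chain']⟩, by simp [ι₀], by simp [ι₀, List.getLast?]⟩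
      intro e he
      simp only [List.mem_cons, List.mem_singleton, List.not_mem_nil, or_false] at he
      rcases he with rfl | rfl
      · exact efalse (Sum.inl x, Sum.inr y) hm1
      · exact etrue (Sum.inl y, Sum.inr z) hm2
    · refine ⟨[(true, Sum.inr (Sum.inr z), Sum.inr (Sum.inl y)),
        (false, Sum.inr (Sum.inl y), Sum.inl x)],
        ⟨by simp, ?_, by simp [List.Chain']⟩, by simp [ι₀], by simp [ι₀, List.getLast?]⟩
      intro e he
      simp only [List.mem_cons, List.mem_singleton, List.not_mem_nil, or_false] at he
      rcases he with rfl | rfl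
      · exact etrue (Sum.inr z, Sum.inl y) hm1
      · exact efalse (Sum.inr y, Sum.inl x) hm2

variable {X Y : Type}

lemma pure_not_inl_inl {γ : PBR X Y} (h : IsPure γ) (x x' : X) :
    ((Sum.inl x, Sum.inl x') : (X ⊕ Y) × (X ⊕ Y)) ∉ γ := by
  intro hm
  rcases h _ hm with ⟨x₀, y₀, he⟩ | ⟨y₀, x₀, he⟩ <;> simp [Prod.ext_iff] at he

lemma pure_not_inr_inr {γ : PBR X Y} (h : IsPure γ) (y y' : Y) :
    ((Sum.inr y, Sum.inr y') : (X ⊕ Y) × (X ⊕ Y)) ∉ γ := by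
  intro hm
  rcases h _ hm with ⟨x₀, y₀, he⟩ | ⟨y₀, x₀, he⟩ <;> simp [Prod.ext_iff] at he

lemma rightPol_not_inr_inr {δ : PBR X X} (h : IsRightPol δ) (x x' : X) :
    ((Sum.inr x, Sum.inr x') : (X ⊕ X) × (X ⊕ X)) ∉ δ := by
  intro hm
  rcases h.2 _ hm with hw | ⟨a, b, he⟩
  · rcases hw with ⟨w, hw | hw⟩ <;> simp [Prod.ext_iff] at hw
  · simp [Prod.ext_iff] at he

lemma leftPol_not_inl_inl {β : PBR X X} (h : IsLeftPol β) (x x' : X) :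
    ((Sum.inl x, Sum.inl x') : (X ⊕ X) × (X ⊕ X)) ∉ β := by
  intro hm
  rcases h.2 _ hm with hw | ⟨a, b, he⟩
  · rcases hw with ⟨w, hw | hw⟩ <;> simp [Prod.ext_iff] at hw
  · simp [Prod.ext_iff] at he

lemma rightPol_inl_inr {δ : PBR X X} (h : IsRightPol δ) (x y : X) :
    ((Sum.inl x, Sum.inr y) : (X ⊕ X) × (X ⊕ X)) ∈ δ ↔ x = y := by
  constructor
  · intro hm
    rcases h.2 _ hm with hw | ⟨a, b, he⟩
    · rcases hw with ⟨w, hw | hw⟩ <;> simp [Prod.ext_iff] at hw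
      exact hw.1.trans hw.2.symm
    · simp [Prod.ext_iff] at he
  · rintro rfl
    exact h.1 ⟨x, Or.inl rfl⟩

lemma rightPol_inr_inl {δ : PBR X X} (h : IsRightPol δ) (x y : X) :
    ((Sum.inr x, Sum.inl y) : (X ⊕ X) × (X ⊕ X)) ∈ δ ↔ x = y := by
  constructor
  · intro hm
    rcases h.2 _ hm with hw | ⟨a, b, he⟩
    · rcases hw with ⟨w, hw | hw⟩ <;> simp [Prod.ext_iff] at hw
      exact hw.1.trans hw.2.symm
    · simp [Prod.ext_iff] at he
  · rintro rfl
    exact h.1 ⟨x, Or.inr rfl⟩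

lemma leftPol_inl_inr {β : PBR X X} (h : IsLeftPol β) (x y : X) :
    ((Sum.inl x, Sum.inr y) : (X ⊕ X) × (X ⊕ X)) ∈ β ↔ x = y := by
  constructor
  · intro hm
    rcases h.2 _ hm with hw | ⟨a, b, he⟩
    · rcases hw with ⟨w, hw | hw⟩ <;> simp [Prod.ext_iff] at hw
      exact hw.1.trans hw.2.symm
    · simp [Prod.ext_iff] at he
  · rintro rfl
    exact h.1 ⟨x, Or.inl rfl⟩

lemma leftPol_inr_inl {β : PBR X X} (h : IsLeftPol β) (x y : X) :
    ((Sum.inr x, Sum.inl y) : (X ⊕ X) × (X ⊕ X)) ∈ β ↔ x = y := by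
  constructor
  · intro hm
    rcases h.2 _ hm with hw | ⟨a, b, he⟩
    · rcases hw with ⟨w, hw | hw⟩ <;> simp [Prod.ext_iff] at hw
      exact hw.1.trans hw.2.symm
    · simp [Prod.ext_iff] at he
  · rintro rfl
    exact h.1 ⟨x, Or.inr rfl⟩

/-- Membership characterization of the triple composite. -/
lemma comp_three_mem {β : PBR Y Y} {γ : PBR X Y} {δ : PBR X X}
    (hβ : IsLeftPol β) (hγ : IsPure γ) (hδ : IsRightPol δ) :
    (∀ x x' : X, ((Sum.inl x, Sum.inl x') : (X ⊕ Y) × (X ⊕ Y)) ∈ comp β (comp γ δ) ↔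
      ((Sum.inl x, Sum.inl x') : (X ⊕ X) × (X ⊕ X)) ∈ δ) ∧
    (∀ (x : X) (y : Y), ((Sum.inl x, Sum.inr y) : (X ⊕ Y) × (X ⊕ Y)) ∈ comp β (comp γ δ) ↔
      ((Sum.inl x, Sum.inr y) : (X ⊕ Y) × (X ⊕ Y)) ∈ γ) ∧
    (∀ (y : Y) (x : X), ((Sum.inr y, Sum.inl x) : (X ⊕ Y) × (X ⊕ Y)) ∈ comp β (comp γ δ) ↔
      ((Sum.inr y, Sum.inl x) : (X ⊕ Y) × (X ⊕ Y)) ∈ γ) ∧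
    (∀ y y' : Y, ((Sum.inr y, Sum.inr y') : (X ⊕ Y) × (X ⊕ Y)) ∈ comp β (comp γ δ) ↔
      ((Sum.inr y, Sum.inr y') : (Y ⊕ Y) × (Y ⊕ Y)) ∈ β) := by
  have h1 := comp_eq (α := δ) (β := γ)
    (fun y y' => rightPol_not_inr_inr hδ y y') (fun y y' => pure_not_inl_inl hγ y y')
  have hS1a : ∀ x x' : X, ((Sum.inl x, Sum.inl x') : (X ⊕ Y) × (X ⊕ Y)) ∈ comp γ δ ↔
      ((Sum.inl x, Sum.inl x') : (X ⊕ X) × (X ⊕ X)) ∈ δ := by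
    intro x x'
    rw [h1]
    simp only [Set.mem_setOf_eq]
    constructor
    · rintro (⟨x₀, x₀', heq, hm⟩ | ⟨y₀, y₀', heq, hm⟩ | ⟨x₀, y₀, y₁, heq, hm1, hm2⟩ |
        ⟨y₀, x₀, y₁, heq, hm1, hm2⟩) <;> simp [Prod.ext_iff] at heq
      obtain ⟨rfl, rfl⟩ := heq
      exact hm
    · intro hm
      exact Or.inl ⟨x, x', rfl, hm⟩
  have hS1b : ∀ (x : X) (y : Y), ((Sum.inl x, Sum.inr y) : (X ⊕ Y) × (X ⊕ Y)) ∈ comp γ δ ↔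
      ((Sum.inl x, Sum.inr y) : (X ⊕ Y) × (X ⊕ Y)) ∈ γ := by
    intro x y
    rw [h1]
    simp only [Set.mem_setOf_eq]
    constructor
    · rintro (⟨x₀, x₀', heq, hm⟩ | ⟨y₀, y₀', heq, hm⟩ | ⟨x₀, y₀, y₁, heq, hm1, hm2⟩ |
        ⟨y₀, x₀, y₁, heq, hm1, hm2⟩) <;> simp [Prod.ext_iff] at heq
      obtain ⟨rfl, rfl⟩ := heq
      obtain rfl := (rightPol_inl_inr hδ _ _).1 hm1
      exact hm2
    · intro hm
      exact Or.inr (Or.inr (Or.inl ⟨x, y, x, rfl, (rightPol_inl_inr hδ x x).2 rfl, hm⟩))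
  have hS1c : ∀ (y : Y) (x : X), ((Sum.inr y, Sum.inl x) : (X ⊕ Y) × (X ⊕ Y)) ∈ comp γ δ ↔
      ((Sum.inr y, Sum.inl x) : (X ⊕ Y) × (X ⊕ Y)) ∈ γ := by
    intro y x
    rw [h1]
    simp only [Set.mem_setOf_eq]
    constructor
    · rintro (⟨x₀, x₀', heq, hm⟩ | ⟨y₀, y₀', heq, hm⟩ | ⟨x₀, y₀, y₁, heq, hm1, hm2⟩ |
        ⟨y₀, x₀, y₁, heq, hm1, hm2⟩) <;> simp [Prod.ext_iff] at heq
      obtain ⟨rfl, rfl⟩ := heq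
      obtain rfl := (rightPol_inr_inl hδ _ _).1 hm2
      exact hm1
    · intro hm
      exact Or.inr (Or.inr (Or.inr ⟨y, x, x, rfl, hm, (rightPol_inr_inl hδ x x).2 rfl⟩))
  have hS1d : ∀ y y' : Y, ((Sum.inr y, Sum.inr y') : (X ⊕ Y) × (X ⊕ Y)) ∉ comp γ δ := by
    intro y y' hmem
    rw [h1] at hmem
    simp only [Set.mem_setOf_eq] at hmem
    rcases hmem with ⟨x₀, x₀', heq, hm⟩ | ⟨y₀, y₀', heq, hm⟩ | ⟨x₀, y₀, y₁, heq, hm1, hm2⟩ |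
        ⟨y₀, x₀, y₁, heq, hm1, hm2⟩ <;> simp [Prod.ext_iff] at heq
    obtain ⟨rfl, rfl⟩ := heq
    exact pure_not_inr_inr hγ _ _ hm
  have h2 := comp_eq (α := comp γ δ) (β := β)
    (fun y y' => hS1d y y') (fun y y' => leftPol_not_inl_inl hβ y y')
  refine ⟨?_, ?_, ?_, ?_⟩
  · intro x x'
    rw [h2]
    simp only [Set.mem_setOf_eq]
    constructor
    · rintro (⟨x₀, x₀', heq, hm⟩ | ⟨y₀, y₀', heq, hm⟩ | ⟨x₀, y₀, y₁, heq, hm1, hm2⟩ |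
        ⟨y₀, x₀, y₁, heq, hm1, hm2⟩) <;> simp [Prod.ext_iff] at heq
      obtain ⟨rfl, rfl⟩ := heq
      exact (hS1a _ _).1 hm
    · intro hm
      exact Or.inl ⟨x, x', rfl, (hS1a _ _).2 hm⟩
  · intro x y
    rw [h2]
    simp only [Set.mem_setOf_eq]
    constructor
    · rintro (⟨x₀, x₀', heq, hm⟩ | ⟨y₀, y₀', heq, hm⟩ | ⟨x₀, y₀, y₁, heq, hm1, hm2⟩ |
        ⟨y₀, x₀, y₁, heq, hm1, hm2⟩) <;> simp [Prod.ext_iff] at heq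
      obtain ⟨rfl, rfl⟩ := heq
      obtain rfl := (leftPol_inl_inr hβ _ _).1 hm2
      exact (hS1b _ _).1 hm1
    · intro hm
      exact Or.inr (Or.inr (Or.inl ⟨x, y, y, rfl, (hS1b _ _).2 hm,
        (leftPol_inl_inr hβ y y).2 rfl⟩))
  · intro y x
    rw [h2]
    simp only [Set.mem_setOf_eq]
    constructor
    · rintro (⟨x₀, x₀', heq, hm⟩ | ⟨y₀, y₀', heq, hm⟩ | ⟨x₀, y₀, y₁, heq, hm1, hm2⟩ |
        ⟨y₀, x₀, y₁, heq, hm1, hm2⟩) <;> simp [Prod.ext_iff] at heq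
      obtain ⟨rfl, rfl⟩ := heq
      obtain rfl := (leftPol_inr_inl hβ _ _).1 hm1
      exact (hS1c _ _).1 hm2
    · intro hm
      exact Or.inr (Or.inr (Or.inr ⟨y, x, y, rfl, (leftPol_inr_inl hβ y y).2 rfl,
        (hS1c _ _).2 hm⟩))
  · intro y y'
    rw [h2]
    simp only [Set.mem_setOf_eq]
    constructor
    · rintro (⟨x₀, x₀', heq, hm⟩ | ⟨y₀, y₀', heq, hm⟩ | ⟨x₀, y₀, y₁, heq, hm1, hm2⟩ |
        ⟨y₀, x₀, y₁, heq, hm1, hm2⟩) <;> simp [Prod.ext_iff] at heq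
      obtain ⟨rfl, rfl⟩ := heq
      exact hm
    · intro hm
      exact Or.inr (Or.inl ⟨y, y', rfl, hm⟩)

lemma isLeftPol_betaP (α : PBR X Y) : IsLeftPol (betaP α) := by
  constructor
  · exact Set.subset_union_left
  · rintro p (hp | ⟨y, y', hm, rfl⟩)
    · exact Or.inl hp
    · exact Or.inr ⟨y, y', rfl⟩

lemma isRightPol_deltaP (α : PBR X Y) : IsRightPol (deltaP α) := by
  constructor
  · exact Set.subset_union_left
  · rintro p (hp | ⟨x, x', hm, rfl⟩)
    · exact Or.inl hp
    · exact Or.inr ⟨x, x', rfl⟩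

lemma isPure_gammaP (α : PBR X Y) : IsPure (gammaP α) := fun p hp => hp.2

lemma deltaP_inl_inl (α : PBR X Y) (x x' : X) :
    ((Sum.inl x, Sum.inl x') : (X ⊕ X) × (X ⊕ X)) ∈ deltaP α ↔
      ((Sum.inl x, Sum.inl x') : (X ⊕ Y) × (X ⊕ Y)) ∈ α := by
  constructor
  · rintro (hp | ⟨x₀, x₀', hm, heq⟩)
    · rcases hp with ⟨w, hw | hw⟩ <;> simp [Prod.ext_iff] at hw
    · simp [Prod.ext_iff] at heq
      obtain ⟨rfl, rfl⟩ := heq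
      exact hm
  · intro hm
    exact Or.inr ⟨x, x', hm, rfl⟩

lemma betaP_inr_inr (α : PBR X Y) (y y' : Y) :
    ((Sum.inr y, Sum.inr y') : (Y ⊕ Y) × (Y ⊕ Y)) ∈ betaP α ↔
      ((Sum.inr y, Sum.inr y') : (X ⊕ Y) × (X ⊕ Y)) ∈ α := by
  constructor
  · rintro (hp | ⟨y₀, y₀', hm, heq⟩)
    · rcases hp with ⟨w, hw | hw⟩ <;> simp [Prod.ext_iff] at hw
    · simp [Prod.ext_iff] at heq
      obtain ⟨rfl, rfl⟩ := heq
      exact hm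
  · intro hm
    exact Or.inr ⟨y, y', hm, rfl⟩

lemma gammaP_inl_inr (α : PBR X Y) (x : X) (y : Y) :
    ((Sum.inl x, Sum.inr y) : (X ⊕ Y) × (X ⊕ Y)) ∈ gammaP α ↔
      ((Sum.inl x, Sum.inr y) : (X ⊕ Y) × (X ⊕ Y)) ∈ α :=
  ⟨fun hp => hp.1, fun hm => ⟨hm, Or.inl ⟨x, y, rfl⟩⟩⟩

lemma gammaP_inr_inl (α : PBR X Y) (y : Y) (x : X) :
    ((Sum.inr y, Sum.inl x) : (X ⊕ Y) × (X ⊕ Y)) ∈ gammaP α ↔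
      ((Sum.inr y, Sum.inl x) : (X ⊕ Y) × (X ⊕ Y)) ∈ α :=
  ⟨fun hp => hp.1, fun hm => ⟨hm, Or.inr ⟨y, x, rfl⟩⟩⟩

end Aux

/-- Polarized factorization: every PBR `α` factors uniquely as
`α = β_α ∘ γ_α ∘ δ_α` with `β_α` a left polarized idempotent, `γ_α` pure and
`δ_α` a right polarized idempotent. -/
theorem polarized_factorization (X Y : Type) [Fintype X] [Fintype Y]
    (α : PBR X Y) :
    α = comp (betaP α) (comp (gammaP α) (deltaP α)) ∧
    ∀ (β : PBR Y Y) (γ : PBR X Y) (δ : PBR X X),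
      IsLeftPol β → IsPure γ → IsRightPol δ →
      α = comp β (comp γ δ) →
      β = betaP α ∧ γ = gammaP α ∧ δ = deltaP α := by
  obtain ⟨M1, M2, M3, M4⟩ :=
    comp_three_mem (isLeftPol_betaP α) (isPure_gammaP α) (isRightPol_deltaP α)
  constructor
  · ext ⟨u, v⟩
    rcases u with x | y <;> rcases v with x' | y'
    · rw [M1, deltaP_inl_inl]
    · rw [M2, gammaP_inl_inr]
    · rw [M3, gammaP_inr_inl]
    · rw [M4, betaP_inr_inr]
  · intro β γ δ hβ hγ hδ h
    obtain ⟨N1, N2, N3, N4⟩ := comp_three_mem hβ hγ hδ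
    rw [← h] at N1 N2 N3 N4
    refine ⟨?_, ?_, ?_⟩
    · ext p
      constructor
      · intro hp
        rcases hβ.2 p hp with he | ⟨y, y', rfl⟩
        · exact Or.inl he
        · exact Or.inr ⟨y, y', (N4 y y').2 hp, rfl⟩
      · rintro (he | ⟨y, y', hm, rfl⟩)
        · exact hβ.1 he
        · exact (N4 y y').1 hm
    · ext p
      constructor
      · intro hp
        refine ⟨?_, hγ p hp⟩
        rcases hγ p hp with ⟨x, y, rfl⟩ | ⟨y, x, rfl⟩
        · exact (N2 x y).2 hp
        · exact (N3 y x).2 hp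
      · rintro ⟨hm, ⟨x, y, rfl⟩ | ⟨y, x, rfl⟩⟩
        · exact (N2 x y).1 hm
        · exact (N3 y x).1 hm
    · ext p
      constructor
      · intro hp
        rcases hδ.2 p hp with he | ⟨x, x', rfl⟩
        · exact Or.inl he
        · exact Or.inr ⟨x, x', (N1 x x').2 hp, rfl⟩
      · rintro (he | ⟨x, x', hm, rfl⟩)
        · exact hδ.1 he
        · exact (N1 x x').1 hm

end PBRPaper
end

section
/- For n ∈ ℕ let B_n be the set of binary relations on Fin n (i.e. subsets of Fin n × Fin n), let ω_n ∈ B_n be the full relation Fin n × Fin n, and let ∘ denote usual composition of binary relations. Then the proportion of triples composing to the full relation tends to 1: the real sequence |{(α,α',α'') ∈ B_n × B_n × B_n : α∘α'∘α'' = ω_n}| / |B_n|³ converges to 1 as n → ∞. -/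
namespace PBRPaper

/-- Usual composition of binary relations: `η∘θ = {(x,z) : ∃ y, (x,y) ∈ θ ∧ (y,z) ∈ η}`. -/
def relComp {X Y Z : Type} (η : Set (Y × Z)) (θ : Set (X × Y)) : Set (X × Z) :=
  {p | ∃ y, (p.1, y) ∈ θ ∧ (y, p.2) ∈ η}

open Finset

abbrev Mb (n : ℕ) := Fin n × Fin n → Bool
abbrev Tb (n : ℕ) := Mb n × Mb n × Mb n

def GoodB {n : ℕ} (t : Tb n) : Prop :=
  ∀ x z : Fin n, ∃ y w : Fin n, t.2.2 (x, w) = true ∧ t.2.1 (w, y) = true ∧ t.1 (y, z) = true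

instance {n} : DecidablePred (GoodB (n := n)) := fun _ => by unfold GoodB; infer_instance

def Ep {n : ℕ} (x : Fin n) (t : Tb n) : Prop := ∀ w, t.2.2 (x, w) = false
instance {n} (x : Fin n) : DecidablePred (Ep x) := fun _ => by unfold Ep; infer_instance

def Dp {n : ℕ} (x z w : Fin n) (t : Tb n) : Prop :=
  t.2.2 (x, w) = true ∧ (∀ w' : Fin n, w' < w → t.2.2 (x, w') = false) ∧
    ∀ y : Fin n, ¬(t.2.1 (w, y) = true ∧ t.1 (y, z) = true)
instance {n} (x z w : Fin n) : DecidablePred (Dp x z w) := fun _ => by unfold Dp; infer_instance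

lemma cover {n : ℕ} {t : Tb n} (h : ¬ GoodB t) :
    ∃ x z : Fin n, Ep x t ∨ ∃ w, Dp x z w t := by
  unfold GoodB at h
  push_neg at h
  obtain ⟨x, z, hxz⟩ := h
  refine ⟨x, z, ?_⟩
  by_cases hE : ∀ w, t.2.2 (x, w) = false
  · exact Or.inl hE
  · push_neg at hE
    right
    have hne : (Finset.univ.filter (fun w => t.2.2 (x, w) = true)).Nonempty := by
      obtain ⟨w, hw⟩ := hE
      exact ⟨w, by simp [Bool.not_eq_false] at hw ⊢; exact hw⟩
    set S := Finset.univ.filter (fun w => t.2.2 (x, w) = true) with hS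
    refine ⟨S.min' hne, ?_, ?_, ?_⟩
    · have := S.min'_mem hne
      simpa [hS] using this
    · intro w' hw'
      by_contra hc
      have hw'S : w' ∈ S := by simp [hS, Bool.not_eq_false] at hc ⊢; exact hc
      exact absurd (S.min'_le _ hw'S) (not_le.mpr hw')
    · intro y ⟨hb, ha⟩
      have hc : t.2.2 (x, S.min' hne) = true := by simpa [hS] using S.min'_mem hne
      exact (hxz y (S.min' hne) hc hb) ha

def eqFstEquiv {n : ℕ} (x : Fin n) : {q : Fin n × Fin n // q.1 = x} ≃ Fin n where
  toFun q := q.1.2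
  invFun w := ⟨(x, w), rfl⟩
  left_inv := by rintro ⟨⟨a, b⟩, rfl⟩; rfl
  right_inv w := rfl

def eqSndEquiv {n : ℕ} (z : Fin n) : {q : Fin n × Fin n // q.2 = z} ≃ Fin n where
  toFun q := q.1.1
  invFun w := ⟨(w, z), rfl⟩
  left_inv := by rintro ⟨⟨a, b⟩, rfl⟩; rfl
  right_inv w := rfl

def iicEquiv {n : ℕ} (x w : Fin n) :
    {q : Fin n × Fin n // q.1 = x ∧ q.2 ≤ w} ≃ Fin (w.val + 1) where
  toFun q := ⟨q.1.2.val, Nat.lt_succ_of_le q.2.2⟩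
  invFun i := ⟨(x, ⟨i.val, lt_of_le_of_lt (Nat.le_of_lt_succ i.2) w.2⟩),
    ⟨rfl, by exact Nat.le_of_lt_succ i.2⟩⟩
  left_inv := by rintro ⟨⟨a, b⟩, ⟨rfl, h⟩⟩; rfl
  right_inv i := rfl

lemma card_ne_fst {n : ℕ} (x : Fin n) :
    Fintype.card {q : Fin n × Fin n // q.1 ≠ x} = n ^ 2 - n := by
  have h1 : Fintype.card {q : Fin n × Fin n // q.1 = x} = n := by
    rw [Fintype.card_congr (eqFstEquiv x), Fintype.card_fin]
  have := Fintype.card_subtype_compl (fun q : Fin n × Fin n => q.1 = x)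
  rw [this, h1]; simp [sq]

lemma card_ne_snd {n : ℕ} (z : Fin n) :
    Fintype.card {q : Fin n × Fin n // q.2 ≠ z} = n ^ 2 - n := by
  have h1 : Fintype.card {q : Fin n × Fin n // q.2 = z} = n := by
    rw [Fintype.card_congr (eqSndEquiv z), Fintype.card_fin]
  have := Fintype.card_subtype_compl (fun q : Fin n × Fin n => q.2 = z)
  rw [this, h1]; simp [sq]

lemma card_not_iic {n : ℕ} (x w : Fin n) :
    Fintype.card {q : Fin n × Fin n // ¬(q.1 = x ∧ q.2 ≤ w)} = n ^ 2 - (w.val + 1) := by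
  have h1 : Fintype.card {q : Fin n × Fin n // q.1 = x ∧ q.2 ≤ w} = w.val + 1 := by
    rw [Fintype.card_congr (iicEquiv x w), Fintype.card_fin]
  have := Fintype.card_subtype_compl (fun q : Fin n × Fin n => q.1 = x ∧ q.2 ≤ w)
  rw [this, h1]; simp [sq]

lemma card_pairs : Fintype.card {p : Bool × Bool // ¬(p.1 = true ∧ p.2 = true)} = 3 := by decide

lemma card_Mb (n : ℕ) : Fintype.card (Mb n) = 2 ^ (n ^ 2) := by
  rw [Fintype.card_fun]; simp [sq]

lemma card_bool_fun {α : Type} [Fintype α] [DecidableEq α] :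
    Fintype.card (α → Bool) = 2 ^ Fintype.card α := by
  rw [Fintype.card_fun, Fintype.card_bool]

lemma cardE_le {n : ℕ} (x : Fin n) :
    Fintype.card {t : Tb n // Ep x t} ≤ 2 ^ (n ^ 2) * 2 ^ (n ^ 2) * 2 ^ (n ^ 2 - n) := by
  classical
  have hinj : Function.Injective
      (fun t : {t : Tb n // Ep x t} =>
        (t.1.1, t.1.2.1, fun q : {q : Fin n × Fin n // q.1 ≠ x} => t.1.2.2 q.1) :
        {t : Tb n // Ep x t} → Mb n × Mb n × ({q : Fin n × Fin n // q.1 ≠ x} → Bool)) := by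
    rintro ⟨⟨a, b, c⟩, hE⟩ ⟨⟨a', b', c'⟩, hE'⟩ h
    simp only [Prod.mk.injEq] at h
    obtain ⟨ha, hb, hc⟩ := h
    refine Subtype.ext ?_
    simp only [Prod.mk.injEq]
    refine ⟨ha, hb, ?_⟩
    funext q
    by_cases hq : q.1 = x
    · have h1 : c q = false := by have := hE q.2; simpa [Ep, ← hq] using this
      have h2 : c' q = false := by have := hE' q.2; simpa [Ep, ← hq] using this
      rw [h1, h2]
    · exact congrFun hc ⟨q, hq⟩
  calc Fintype.card {t : Tb n // Ep x t}
      ≤ Fintype.card (Mb n × Mb n × ({q : Fin n × Fin n // q.1 ≠ x} → Bool)) :=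
        Fintype.card_le_of_injective _ hinj
    _ = 2 ^ (n ^ 2) * 2 ^ (n ^ 2) * 2 ^ (n ^ 2 - n) := by
        rw [Fintype.card_prod, Fintype.card_prod, card_Mb, card_bool_fun, card_ne_fst, mul_assoc]

lemma cardD_le {n : ℕ} (x z w : Fin n) :
    Fintype.card {t : Tb n // Dp x z w t} ≤
      3 ^ n * 2 ^ (n ^ 2 - n) * 2 ^ (n ^ 2 - n) * 2 ^ (n ^ 2 - (w.val + 1)) := by
  classical
  have hinj : Function.Injective
      (fun t : {t : Tb n // Dp x z w t} =>
        ((fun y => ⟨(t.1.2.1 (w, y), t.1.1 (y, z)), t.2.2.2 y⟩,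
          fun q => t.1.2.1 q.1,
          fun q => t.1.1 q.1,
          fun q => t.1.2.2 q.1) :
          (Fin n → {p : Bool × Bool // ¬(p.1 = true ∧ p.2 = true)}) ×
          ({q : Fin n × Fin n // q.1 ≠ w} → Bool) × ({q : Fin n × Fin n // q.2 ≠ z} → Bool) ×
          ({q : Fin n × Fin n // ¬(q.1 = x ∧ q.2 ≤ w)} → Bool))) := by
    rintro ⟨⟨a, b, c⟩, hD⟩ ⟨⟨a', b', c'⟩, hD'⟩ h
    simp only [Prod.mk.injEq] at h
    obtain ⟨h1, h2, h3, h4⟩ := h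
    refine Subtype.ext ?_
    simp only [Prod.mk.injEq]
    refine ⟨?_, ?_, ?_⟩
    · funext q
      by_cases hq : q.2 = z
      · have := congrFun h1 q.1
        have := congrArg (fun p => p.1.2) this
        simpa [← hq] using this
      · exact congrFun h3 ⟨q, hq⟩
    · funext q
      by_cases hq : q.1 = w
      · have := congrFun h1 q.2
        have := congrArg (fun p => p.1.1) this
        simpa [← hq] using this
      · exact congrFun h2 ⟨q, hq⟩
    · funext q
      by_cases hq : q.1 = x ∧ q.2 ≤ w
      · rcases eq_or_lt_of_le hq.2 with heq | hlt
        · have e1 : c q = true := by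
            have := hD.1; rw [show q = (x, w) from Prod.ext hq.1 heq]; exact this
          have e2 : c' q = true := by
            have := hD'.1; rw [show q = (x, w) from Prod.ext hq.1 heq]; exact this
          rw [e1, e2]
        · have e1 : c q = false := by
            have := hD.2.1 q.2 hlt; rw [show q = (x, q.2) from Prod.ext hq.1 rfl]; exact this
          have e2 : c' q = false := by
            have := hD'.2.1 q.2 hlt; rw [show q = (x, q.2) from Prod.ext hq.1 rfl]; exact this
          rw [e1, e2]
      · exact congrFun h4 ⟨q, hq⟩
  calc Fintype.card {t : Tb n // Dp x z w t}
      ≤ Fintype.card ((Fin n → {p : Bool × Bool // ¬(p.1 = true ∧ p.2 = true)}) ×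
          ({q : Fin n × Fin n // q.1 ≠ w} → Bool) × ({q : Fin n × Fin n // q.2 ≠ z} → Bool) ×
          ({q : Fin n × Fin n // ¬(q.1 = x ∧ q.2 ≤ w)} → Bool)) :=
        Fintype.card_le_of_injective _ hinj
    _ = 3 ^ n * 2 ^ (n ^ 2 - n) * 2 ^ (n ^ 2 - n) * 2 ^ (n ^ 2 - (w.val + 1)) := by
        rw [Fintype.card_prod, Fintype.card_prod, Fintype.card_prod,
          Fintype.card_fun, card_pairs, Fintype.card_fin,
          card_bool_fun, card_bool_fun, card_bool_fun,
          card_ne_fst, card_ne_snd, card_not_iic]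
        ring

lemma bad_le_nat (n : ℕ) :
    Fintype.card {t : Tb n // ¬ GoodB t} ≤
      ∑ _xz : Fin n × Fin n, (2 ^ (n ^ 2) * 2 ^ (n ^ 2) * 2 ^ (n ^ 2 - n) +
        ∑ w : Fin n, 3 ^ n * 2 ^ (n ^ 2 - n) * 2 ^ (n ^ 2 - n) * 2 ^ (n ^ 2 - (w.val + 1))) := by
  classical
  have hsub : (univ.filter (fun t : Tb n => ¬ GoodB t)) ⊆
      univ.biUnion (fun xz : Fin n × Fin n =>
        (univ.filter (Ep xz.1)) ∪ univ.biUnion (fun w => univ.filter (Dp xz.1 xz.2 w))) := by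
    intro t ht
    simp only [mem_filter, mem_univ, true_and] at ht
    obtain ⟨x, z, h⟩ := cover ht
    simp only [mem_biUnion, mem_union, mem_filter, mem_univ, true_and]
    refine ⟨(x, z), ?_⟩
    rcases h with h | ⟨w, hw⟩
    · exact Or.inl h
    · exact Or.inr ⟨w, hw⟩
  calc Fintype.card {t : Tb n // ¬ GoodB t}
      = (univ.filter (fun t : Tb n => ¬ GoodB t)).card := Fintype.card_subtype _
    _ ≤ (univ.biUnion (fun xz : Fin n × Fin n =>
        (univ.filter (Ep xz.1)) ∪ univ.biUnion (fun w => univ.filter (Dp xz.1 xz.2 w)))).card :=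
        Finset.card_le_card hsub
    _ ≤ ∑ xz : Fin n × Fin n, ((univ.filter (Ep xz.1)) ∪
          univ.biUnion (fun w => univ.filter (Dp xz.1 xz.2 w))).card :=
        Finset.card_biUnion_le
    _ ≤ ∑ _xz : Fin n × Fin n, (2 ^ (n ^ 2) * 2 ^ (n ^ 2) * 2 ^ (n ^ 2 - n) +
        ∑ w : Fin n, 3 ^ n * 2 ^ (n ^ 2 - n) * 2 ^ (n ^ 2 - n) * 2 ^ (n ^ 2 - (w.val + 1))) := by
        apply Finset.sum_le_sum
        intro xz _
        calc ((univ.filter (Ep xz.1)) ∪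
              univ.biUnion (fun w => univ.filter (Dp xz.1 xz.2 w))).card
            ≤ (univ.filter (Ep xz.1)).card +
              (univ.biUnion (fun w => univ.filter (Dp xz.1 xz.2 w))).card :=
              Finset.card_union_le _ _
          _ ≤ (univ.filter (Ep xz.1)).card + ∑ w : Fin n, (univ.filter (Dp xz.1 xz.2 w)).card := by
              gcongr; exact Finset.card_biUnion_le
          _ ≤ _ := by
              gcongr with w
              · rw [← Fintype.card_subtype]; exact cardE_le xz.1
              · rw [← Fintype.card_subtype]; exact cardD_le xz.1 xz.2 w

end PBRPaper

namespace PBRPaper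

lemma rpow_sub' {a b : ℕ} (h : b ≤ a) : (2:ℝ)^(a-b) = 2^a * (1/2)^b := by
  have h2 : (2:ℝ)^(a-b) * 2^b = 2^a := by rw [← pow_add, Nat.sub_add_cancel h]
  have hb : (2:ℝ)^b ≠ 0 := by positivity
  field_simp
  rw [← h2, one_div, inv_pow, mul_assoc, mul_inv_cancel₀ hb, mul_one]

lemma sum_halves (n : ℕ) : ∑ w : Fin n, ((1:ℝ)/2)^(w.val+1) ≤ 1 := by
  rw [Fin.sum_univ_eq_sum_range (fun i => ((1:ℝ)/2)^(i+1))]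
  have h := sum_geometric_two_le n
  have e : ∑ i ∈ Finset.range n, ((1:ℝ)/2)^(i+1) = (1/2) * ∑ i ∈ Finset.range n, ((1:ℝ)/2)^i := by
    rw [Finset.mul_sum]; apply Finset.sum_congr rfl; intros; ring
  rw [e]; linarith

lemma bad_le_real (n : ℕ) :
    (Fintype.card {t : Tb n // ¬ GoodB t} : ℝ) ≤
      (n:ℝ)^2 * ((1/2)^n + (3/4)^n) * 2^(3*n^2) := by
  have hnn : n ≤ n^2 := Nat.le_self_pow two_ne_zero n
  have hA : (2:ℝ)^(n^2-n) = 2^(n^2) * (1/2)^n := rpow_sub' hnn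
  have h3 : (2:ℝ)^(3*n^2) = 2^(n^2)*2^(n^2)*2^(n^2) := by
    rw [show 3*n^2 = n^2+n^2+n^2 by ring, pow_add, pow_add]
  have h34 : ((3:ℝ)/4)^n = 3^n * ((1/2)^n * (1/2)^n) := by
    rw [← mul_pow, ← mul_pow]; norm_num
  calc (Fintype.card {t : Tb n // ¬ GoodB t} : ℝ)
      ≤ ((∑ _xz : Fin n × Fin n, (2 ^ (n ^ 2) * 2 ^ (n ^ 2) * 2 ^ (n ^ 2 - n) +
          ∑ w : Fin n, 3 ^ n * 2 ^ (n ^ 2 - n) * 2 ^ (n ^ 2 - n) * 2 ^ (n ^ 2 - (w.val + 1))) : ℕ) : ℝ) := by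
        exact_mod_cast bad_le_nat n
    _ = ∑ _xz : Fin n × Fin n, ((2:ℝ) ^ (n ^ 2) * 2 ^ (n ^ 2) * 2 ^ (n ^ 2 - n) +
          ∑ w : Fin n, (3:ℝ) ^ n * 2 ^ (n ^ 2 - n) * 2 ^ (n ^ 2 - n) * 2 ^ (n ^ 2 - (w.val + 1))) := by
        push_cast; ring
    _ ≤ ∑ _xz : Fin n × Fin n, (((1:ℝ)/2)^n + (3/4)^n) * 2^(3*n^2) := by
        apply Finset.sum_le_sum
        intro xz _
        have hfirst : (2:ℝ) ^ (n ^ 2) * 2 ^ (n ^ 2) * 2 ^ (n ^ 2 - n) = (1/2)^n * 2^(3*n^2) := by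
          rw [hA, h3]; ring
        have hsecond : ∑ w : Fin n, (3:ℝ) ^ n * 2 ^ (n ^ 2 - n) * 2 ^ (n ^ 2 - n) * 2 ^ (n ^ 2 - (w.val + 1))
            ≤ (3/4:ℝ)^n * 2^(3*n^2) := by
          have heach : ∀ w : Fin n, (3:ℝ) ^ n * 2 ^ (n ^ 2 - n) * 2 ^ (n ^ 2 - n) * 2 ^ (n ^ 2 - (w.val + 1))
              = (3/4:ℝ)^n * 2^(3*n^2) * (1/2)^(w.val+1) := by
            intro w
            have hw : w.val + 1 ≤ n ^ 2 := le_trans w.2 hnn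
            rw [hA, rpow_sub' hw, h3, h34]; ring
          calc ∑ w : Fin n, (3:ℝ) ^ n * 2 ^ (n ^ 2 - n) * 2 ^ (n ^ 2 - n) * 2 ^ (n ^ 2 - (w.val + 1))
              = (3/4:ℝ)^n * 2^(3*n^2) * ∑ w : Fin n, ((1:ℝ)/2)^(w.val+1) := by
                rw [Finset.mul_sum]; exact Finset.sum_congr rfl (fun w _ => heach w)
            _ ≤ (3/4:ℝ)^n * 2^(3*n^2) * 1 := by
                apply mul_le_mul_of_nonneg_left (sum_halves n); positivity
            _ = (3/4:ℝ)^n * 2^(3*n^2) := by ring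
        rw [hfirst, add_mul]
        linarith
    _ = (n:ℝ)^2 * ((1/2)^n + (3/4)^n) * 2^(3*n^2) := by
        rw [Finset.sum_const, Finset.card_univ, Fintype.card_prod, Fintype.card_fin]
        push_cast
        ring

noncomputable def eSB (n : ℕ) : Set (Fin n × Fin n) ≃ Mb n :=
  Equiv.arrowCongr (Equiv.refl _) Equiv.propEquivBool

lemma mem_eSB {n : ℕ} (s : Set (Fin n × Fin n)) (p : Fin n × Fin n) :
    p ∈ s ↔ eSB n s p = true := by
  simp [eSB, Equiv.propEquivBool, Equiv.arrowCongr]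
  exact (@decide_eq_true_iff _ (Classical.propDecidable _)).symm

noncomputable def tripleEquiv (n : ℕ) :
    {t : Set (Fin n × Fin n) × Set (Fin n × Fin n) × Set (Fin n × Fin n) //
      relComp t.1 (relComp t.2.1 t.2.2) = (Set.univ : Set (Fin n × Fin n))} ≃
    {t : Tb n // GoodB t} := by
  refine Equiv.subtypeEquiv
    (Equiv.prodCongr (eSB n) (Equiv.prodCongr (eSB n) (eSB n))) (fun t => ?_)
  rw [Set.eq_univ_iff_forall]
  constructor
  · intro h x z
    obtain ⟨y, ⟨w, hw1, hw2⟩, hy⟩ := h (x, z)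
    exact ⟨y, w, (mem_eSB _ _).mp hw1, (mem_eSB _ _).mp hw2, (mem_eSB _ _).mp hy⟩
  · intro h p
    obtain ⟨y, w, h1, h2, h3⟩ := h p.1 p.2
    exact ⟨y, ⟨w, (mem_eSB _ _).mpr h1, (mem_eSB _ _).mpr h2⟩, (mem_eSB _ _).mpr h3⟩

lemma card_Tb (n : ℕ) : Fintype.card (Tb n) = 2 ^ (3 * n ^ 2) := by
  rw [Fintype.card_prod, Fintype.card_prod, card_Mb, ← pow_add, ← pow_add]
  congr 1
  ring

lemma good_add_bad (n : ℕ) :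
    Fintype.card {t : Tb n // GoodB t} + Fintype.card {t : Tb n // ¬ GoodB t} =
      2 ^ (3 * n ^ 2) := by
  classical
  rw [Fintype.card_subtype, Fintype.card_subtype, ← card_Tb n, ← Finset.card_univ]
  exact Finset.card_filter_add_card_filter_not (fun t => GoodB t)

/-- Almost all triples of binary relations on `Fin n` compose to the full
relation: the proportion of triples `(α,α',α'')` with `α∘α'∘α'' = ω_n` tends
to `1` as `n → ∞`. -/
theorem random_triple_products_full :
    Filter.Tendsto (fun n : ℕ =>
      (Nat.card {t : Set (Fin n × Fin n) × Set (Fin n × Fin n) × Set (Fin n × Fin n) //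
          relComp t.1 (relComp t.2.1 t.2.2) = (Set.univ : Set (Fin n × Fin n))} : ℝ) /
        (Nat.card (Set (Fin n × Fin n)) : ℝ) ^ 3)
      Filter.atTop (nhds 1) := by
  have hval : ∀ n : ℕ,
      (Nat.card {t : Set (Fin n × Fin n) × Set (Fin n × Fin n) × Set (Fin n × Fin n) //
          relComp t.1 (relComp t.2.1 t.2.2) = (Set.univ : Set (Fin n × Fin n))} : ℝ) /
        (Nat.card (Set (Fin n × Fin n)) : ℝ) ^ 3 =
      1 - (Fintype.card {t : Tb n // ¬ GoodB t} : ℝ) / 2 ^ (3 * n ^ 2) := by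
    intro n
    have hgood : Nat.card {t : Set (Fin n × Fin n) × Set (Fin n × Fin n) × Set (Fin n × Fin n) //
        relComp t.1 (relComp t.2.1 t.2.2) = (Set.univ : Set (Fin n × Fin n))} =
        Fintype.card {t : Tb n // GoodB t} := by
      rw [Nat.card_congr (tripleEquiv n), Nat.card_eq_fintype_card]
    have hden : (Nat.card (Set (Fin n × Fin n)) : ℝ) ^ 3 = 2 ^ (3 * n ^ 2) := by
      rw [Nat.card_congr (eSB n), Nat.card_eq_fintype_card, card_Mb]
      push_cast
      rw [← pow_mul]
      congr 1
      ring
    rw [hgood, hden]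
    have hgb := good_add_bad n
    have h2 : (0:ℝ) < 2 ^ (3 * n ^ 2) := by positivity
    have hcast : (Fintype.card {t : Tb n // GoodB t} : ℝ) +
        (Fintype.card {t : Tb n // ¬ GoodB t} : ℝ) = 2 ^ (3 * n ^ 2) := by
      exact_mod_cast congrArg (Nat.cast : ℕ → ℝ) hgb
    rw [eq_sub_iff_add_eq, ← add_div, div_eq_one_iff_eq (ne_of_gt h2)]
    exact hcast
  have hlim : Filter.Tendsto (fun n : ℕ =>
      1 - ((n:ℝ)^2 * (1/2)^n + (n:ℝ)^2 * (3/4)^n)) Filter.atTop (nhds 1) := by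
    have h1 := tendsto_pow_const_mul_const_pow_of_abs_lt_one 2
      (show |(1:ℝ)/2| < 1 by rw [abs_of_pos]; norm_num; norm_num)
    have h2 := tendsto_pow_const_mul_const_pow_of_abs_lt_one 2
      (show |(3:ℝ)/4| < 1 by rw [abs_of_pos]; norm_num; norm_num)
    have := (h1.add h2).const_sub 1
    simpa using this
  refine Filter.Tendsto.congr (fun n => (hval n).symm) ?_
  refine tendsto_of_tendsto_of_tendsto_of_le_of_le' hlim tendsto_const_nhds ?_ ?_
  · apply Filter.Eventually.of_forall
    intro n
    have hb := bad_le_real n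
    have h2 : (0:ℝ) < 2 ^ (3 * n ^ 2) := by positivity
    have : (Fintype.card {t : Tb n // ¬ GoodB t} : ℝ) / 2 ^ (3 * n ^ 2) ≤
        (n:ℝ)^2 * ((1/2)^n + (3/4)^n) := by
      rw [div_le_iff₀ h2]
      exact hb
    nlinarith [this]
  · apply Filter.Eventually.of_forall
    intro n
    have h2 : (0:ℝ) < 2 ^ (3 * n ^ 2) := by positivity
    have : (0:ℝ) ≤ (Fintype.card {t : Tb n // ¬ GoodB t} : ℝ) / 2 ^ (3 * n ^ 2) := by
      positivity
    linarith

end PBRPaper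
end

section
/- For n ∈ ℕ let P_n denote the set of PBRs on (Fin n, Fin n) and let ω̄_n ∈ P_n be the full PBR, containing all pairs of elements of Fin n ⊕ Fin n as edges. Then the proportion of pairs of PBRs composing to the full PBR tends to 1: the real sequence |{(α,β) ∈ P_n × P_n : β∘α = ω̄_n}| / |P_n|² converges to 1 as n → ∞. -/
namespace PBRPaper

variable {X Y Z : Type}

/-! ### Auxiliary setup for the proof -/

section Aux

abbrev En (n : ℕ) : Type := (Fin n ⊕ Fin n) × (Fin n ⊕ Fin n)
abbrev Vn (n : ℕ) : Type := En n ⊕ En n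
abbrev Qn (n : ℕ) : Type := PBR (Fin n) (Fin n) × PBR (Fin n) (Fin n)

open Classical in
/-- Split `V → Bool` along an injection `f : A → V`. -/
noncomputable def splitEquiv {V A : Type} (f : A → V) (hf : Function.Injective f) :
    (V → Bool) ≃ (A → Bool) × ({v : V // v ∉ Set.range f} → Bool) where
  toFun g := (fun a => g (f a), fun v => g v.1)
  invFun x := fun v => if hv : ∃ a, f a = v then x.1 hv.choose else x.2 ⟨v, fun h => hv h⟩
  left_inv g := by
    funext v
    by_cases hv : ∃ a, f a = v
    · simp only [dif_pos hv]; rw [hv.choose_spec]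
    · simp only [dif_neg hv]
  right_inv x := by
    refine Prod.ext ?_ ?_
    · funext a
      have hv : ∃ a', f a' = f a := ⟨a, rfl⟩
      simp only [dif_pos hv]
      rw [hf hv.choose_spec]
    · funext v
      have hv : ¬ ∃ a, f a = v.1 := v.2
      simp only [dif_neg hv]

lemma key_count {V A : Type} [Finite V] (f : A → V) (hf : Function.Injective f)
    (p : (A → Bool) → Prop) :
    Nat.card {g : V → Bool // p (fun a => g (f a))} * Nat.card (A → Bool) =
      Nat.card {h : A → Bool // p h} * Nat.card (V → Bool) := by
  have e1 : {g : V → Bool // p (fun a => g (f a))} ≃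
      {x : (A → Bool) × ({v : V // v ∉ Set.range f} → Bool) // p x.1} :=
    Equiv.subtypeEquiv (splitEquiv f hf) (fun g => Iff.rfl)
  have e2 : {x : (A → Bool) × ({v : V // v ∉ Set.range f} → Bool) // p x.1} ≃
      {h : A → Bool // p h} × ({v : V // v ∉ Set.range f} → Bool) :=
    Equiv.prodSubtypeFstEquivSubtypeProd
  rw [Nat.card_congr (e1.trans e2), Nat.card_congr (splitEquiv f hf), Nat.card_prod,
    Nat.card_prod]
  ring

lemma nat_card_sigma {ι : Type} [Fintype ι] (f : ι → Type) [∀ i, Finite (f i)] :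
    Nat.card (Σ i, f i) = ∑ i : ι, Nat.card (f i) := by
  letI : ∀ i, Fintype (f i) := fun i => Fintype.ofFinite _
  simp [Nat.card_eq_fintype_card]

lemma card_add_card_compl {α : Type} [Finite α] (p : α → Prop) :
    Nat.card {x // p x} + Nat.card {x // ¬ p x} = Nat.card α := by
  classical
  letI := Fintype.ofFinite α
  simp only [Nat.card_eq_fintype_card]
  rw [← Fintype.card_congr (Equiv.sumCompl p), Fintype.card_sum]

open Sum in
/-- For a target edge `(a,b)` and a hub `y`, four edges whose joint presence
guarantees a connecting sequence from `a` to `b` through `y`. Left component: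
edges of `α`; right component: edges of `β`. -/
def req {n : ℕ} (a b : Fin n ⊕ Fin n) (y : Fin n) : Fin 4 → Vn n :=
  match a, b with
  | inl x, inl x' => ![.inl (inl x, inr y), .inr (inl y, inl y), .inl (inr y, inl x'), .inr (inl y, inr y)]
  | inl x, inr z => ![.inl (inl x, inr y), .inr (inl y, inl y), .inl (inr y, inr y), .inr (inl y, inr z)]
  | inr z, inl x => ![.inr (inr z, inl y), .inl (inr y, inr y), .inr (inl y, inl y), .inl (inr y, inl x)]
  | inr z, inr z' => ![.inr (inr z, inl y), .inl (inr y, inr y), .inr (inl y, inr z'), .inl (inr y, inl y)]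

lemma req_inj {n : ℕ} (a b : Fin n ⊕ Fin n) :
    Function.Injective (fun q : Fin n × Fin 4 => req a b q.1 q.2) := by
  rintro ⟨y, i⟩ ⟨y', j⟩ h
  simp only at h
  rcases a with x | z <;> rcases b with x' | z' <;>
    fin_cases i <;> fin_cases j <;> simp_all [req]

/-- Presence of a labelled edge position in a pair of PBRs. -/
def pres {n : ℕ} (q : Qn n) : Vn n → Prop :=
  Sum.elim (· ∈ q.1) (· ∈ q.2)

noncomputable def qEquiv (n : ℕ) : Qn n ≃ (Vn n → Bool) where
  toFun q v := @decide (pres q v) (Classical.propDecidable _)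
  invFun g := ({e | g (.inl e) = true}, {e | g (.inr e) = true})
  left_inv q := by
    refine Prod.ext ?_ ?_ <;> (ext e; simp [pres]; exact @decide_eq_true_iff _ (Classical.propDecidable _))
  right_inv g := by
    funext v
    cases v <;> simp [pres] <;> exact Bool.eq_iff_iff.mpr (@decide_eq_true_iff _ (Classical.propDecidable _))

lemma pres_iff {n : ℕ} (q : Qn n) (v : Vn n) :
    pres q v ↔ qEquiv n q v = true := by
  simp [qEquiv]

open Sum in
lemma mem_comp_of_req {n : ℕ} (q : Qn n)
    (a b : Fin n ⊕ Fin n) (y : Fin n) (h : ∀ i, pres q (req a b y i)) :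
    (a, b) ∈ comp q.2 q.1 := by
  have h0 := h 0; have h1 := h 1; have h2 := h 2; have h3 := h 3
  rcases a with x | z <;> rcases b with x' | z' <;>
    simp only [req, pres, Matrix.cons_val_zero, Matrix.cons_val_one, Matrix.head_cons,
      Matrix.cons_val_two, Matrix.tail_cons, Matrix.cons_val_three, Sum.elim_inl,
      Sum.elim_inr, Matrix.cons_val_fin_one, Fin.isValue] at h0 h1 h2 h3
  · exact ⟨[(false, (.inl x, .inr (.inl y))), (true, (.inr (.inl y), .inr (.inl y))),
      (false, (.inr (.inl y), .inl x'))],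
      ⟨by simp, by
        intro e he
        simp only [List.mem_cons, List.not_mem_nil, or_false] at he
        rcases he with rfl | rfl | rfl
        · exact ⟨(inl x, inr y), h0, rfl, rfl⟩
        · exact ⟨(inl y, inl y), h1, rfl, rfl⟩
        · exact ⟨(inr y, inl x'), h2, rfl, rfl⟩, by simp [List.Chain']⟩, by simp [ι₀], by simp [ι₀]⟩
  · exact ⟨[(false, (.inl x, .inr (.inl y))), (true, (.inr (.inl y), .inr (.inl y))),
      (false, (.inr (.inl y), .inr (.inl y))), (true, (.inr (.inl y), .inr (.inr z')))],
      ⟨by simp, by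
        intro e he
        simp only [List.mem_cons, List.not_mem_nil, or_false] at he
        rcases he with rfl | rfl | rfl | rfl
        · exact ⟨(inl x, inr y), h0, rfl, rfl⟩
        · exact ⟨(inl y, inl y), h1, rfl, rfl⟩
        · exact ⟨(inr y, inr y), h2, rfl, rfl⟩
        · exact ⟨(inl y, inr z'), h3, rfl, rfl⟩, by simp [List.Chain']⟩, by simp [ι₀], by simp [ι₀]⟩
  · exact ⟨[(true, (.inr (.inr z), .inr (.inl y))), (false, (.inr (.inl y), .inr (.inl y))),
      (true, (.inr (.inl y), .inr (.inl y))), (false, (.inr (.inl y), .inl x'))],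
      ⟨by simp, by
        intro e he
        simp only [List.mem_cons, List.not_mem_nil, or_false] at he
        rcases he with rfl | rfl | rfl | rfl
        · exact ⟨(inr z, inl y), h0, rfl, rfl⟩
        · exact ⟨(inr y, inr y), h1, rfl, rfl⟩
        · exact ⟨(inl y, inl y), h2, rfl, rfl⟩
        · exact ⟨(inr y, inl x'), h3, rfl, rfl⟩, by simp [List.Chain']⟩, by simp [ι₀], by simp [ι₀]⟩
  · exact ⟨[(true, (.inr (.inr z), .inr (.inl y))), (false, (.inr (.inl y), .inr (.inl y))),
      (true, (.inr (.inl y), .inr (.inr z')))],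
      ⟨by simp, by
        intro e he
        simp only [List.mem_cons, List.not_mem_nil, or_false] at he
        rcases he with rfl | rfl | rfl
        · exact ⟨(inr z, inl y), h0, rfl, rfl⟩
        · exact ⟨(inr y, inr y), h1, rfl, rfl⟩
        · exact ⟨(inl y, inr z'), h2, rfl, rfl⟩, by simp [List.Chain']⟩, by simp [ι₀], by simp [ι₀]⟩

/-- A pair of PBRs is bad at `ab` if, for every hub `y`, some required edge is missing. -/
def BadAt {n : ℕ} (ab : En n) (q : Qn n) : Prop :=
  ∀ y : Fin n, ∃ i : Fin 4, ¬ pres q (req ab.1 ab.2 y i)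

lemma exists_badAt_of_ne_univ {n : ℕ} (q : Qn n)
    (h : comp q.2 q.1 ≠ (Set.univ : PBR (Fin n) (Fin n))) :
    ∃ ab : En n, BadAt ab q := by
  by_contra hc
  push_neg at hc
  apply h
  rw [Set.eq_univ_iff_forall]
  rintro ⟨a, b⟩
  obtain ⟨y, hy⟩ := not_forall.mp (hc (a, b))
  push_neg at hy
  exact mem_comp_of_req q a b y hy

lemma card_badAt {n : ℕ} (ab : En n) :
    Nat.card {q : Qn n // BadAt ab q} * 16 ^ n = 15 ^ n * Nat.card (Qn n) := by
  have e0 : {q : Qn n // BadAt ab q} ≃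
      {g : Vn n → Bool // ∀ y : Fin n, ∃ i : Fin 4,
        ¬ (fun a : Fin n × Fin 4 => g (req ab.1 ab.2 a.1 a.2)) (y, i) = true} :=
    Equiv.subtypeEquiv (qEquiv n) (by
      intro q
      unfold BadAt
      refine forall_congr' fun y => exists_congr fun i => ?_
      rw [pres_iff] )
  have hk := key_count (fun a : Fin n × Fin 4 => req ab.1 ab.2 a.1 a.2) (req_inj ab.1 ab.2)
    (fun h : Fin n × Fin 4 → Bool => ∀ y : Fin n, ∃ i : Fin 4, ¬ h (y, i) = true)
  have hA : Nat.card (Fin n × Fin 4 → Bool) = 16 ^ n := by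
    rw [Nat.card_fun, Nat.card_prod]
    simp only [Nat.card_eq_fintype_card, Fintype.card_fin, Fintype.card_bool]
    rw [mul_comm n 4, pow_mul]
    norm_num
  have hH : Nat.card {h : Fin n × Fin 4 → Bool // ∀ y : Fin n, ∃ i : Fin 4, ¬ h (y, i) = true}
      = 15 ^ n := by
    have e1 : {h : Fin n × Fin 4 → Bool // ∀ y : Fin n, ∃ i : Fin 4, ¬ h (y, i) = true} ≃
        {h : Fin n → Fin 4 → Bool // ∀ y : Fin n, ∃ i : Fin 4, ¬ h y i = true} :=
      Equiv.subtypeEquiv (Equiv.curry _ _ _) (fun h => Iff.rfl)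
    have e2 : {h : Fin n → Fin 4 → Bool // ∀ y : Fin n, ∃ i : Fin 4, ¬ h y i = true} ≃
        ∀ _ : Fin n, {t : Fin 4 → Bool // ∃ i : Fin 4, ¬ t i = true} :=
      Equiv.subtypePiEquivPi (p := fun (_ : Fin n) (t : Fin 4 → Bool) => ∃ i : Fin 4, ¬ t i = true)
    rw [Nat.card_congr (e1.trans e2), Nat.card_pi]
    have : Nat.card {t : Fin 4 → Bool // ∃ i : Fin 4, ¬ t i = true} = 15 := by
      rw [Nat.card_eq_fintype_card]
      decide
    simp only [this, Finset.prod_const, Finset.card_univ, Fintype.card_fin]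
  rw [Nat.card_congr e0, Nat.card_congr (qEquiv n)]
  calc Nat.card {g : Vn n → Bool // ∀ y : Fin n, ∃ i : Fin 4,
        ¬ (fun a : Fin n × Fin 4 => g (req ab.1 ab.2 a.1 a.2)) (y, i) = true} * 16 ^ n
      = Nat.card {g : Vn n → Bool // ∀ y : Fin n, ∃ i : Fin 4,
        ¬ (fun a : Fin n × Fin 4 => g (req ab.1 ab.2 a.1 a.2)) (y, i) = true} *
          Nat.card (Fin n × Fin 4 → Bool) := by rw [hA]
    _ = Nat.card {h : Fin n × Fin 4 → Bool // ∀ y : Fin n, ∃ i : Fin 4, ¬ h (y, i) = true} *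
          Nat.card (Vn n → Bool) := hk
    _ = 15 ^ n * Nat.card (Vn n → Bool) := by rw [hH]

lemma card_bad_le {n : ℕ} :
    Nat.card {q : Qn n // comp q.2 q.1 ≠ (Set.univ : PBR (Fin n) (Fin n))} * 16 ^ n ≤
      (2 * n) * (2 * n) * (15 ^ n * Nat.card (Qn n)) := by
  classical
  have hinj : Function.Injective
      (fun x : {q : Qn n // comp q.2 q.1 ≠ (Set.univ : PBR (Fin n) (Fin n))} =>
        (⟨(exists_badAt_of_ne_univ x.1 x.2).choose,
          ⟨x.1, (exists_badAt_of_ne_univ x.1 x.2).choose_spec⟩⟩ :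
            Σ ab : En n, {q : Qn n // BadAt ab q})) := by
    intro x y hxy
    have := congrArg (fun s : Σ ab : En n, {q : Qn n // BadAt ab q} => s.2.1) hxy
    exact Subtype.ext this
  have h1 : Nat.card {q : Qn n // comp q.2 q.1 ≠ (Set.univ : PBR (Fin n) (Fin n))} ≤
      Nat.card (Σ ab : En n, {q : Qn n // BadAt ab q}) :=
    Nat.card_le_card_of_injective _ hinj
  have h2 : Nat.card (Σ ab : En n, {q : Qn n // BadAt ab q}) =
      ∑ ab : En n, Nat.card {q : Qn n // BadAt ab q} :=
    nat_card_sigma _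
  calc Nat.card {q : Qn n // comp q.2 q.1 ≠ (Set.univ : PBR (Fin n) (Fin n))} * 16 ^ n
      ≤ (∑ ab : En n, Nat.card {q : Qn n // BadAt ab q}) * 16 ^ n := by
        exact Nat.mul_le_mul_right _ (h1.trans_eq h2)
    _ = ∑ ab : En n, Nat.card {q : Qn n // BadAt ab q} * 16 ^ n := by
        rw [Finset.sum_mul]
    _ = ∑ _ab : En n, 15 ^ n * Nat.card (Qn n) := by
        exact Finset.sum_congr rfl fun ab _ => card_badAt ab
    _ = Fintype.card (En n) * (15 ^ n * Nat.card (Qn n)) := by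
        rw [Finset.sum_const, Finset.card_univ, smul_eq_mul]
    _ = (2 * n) * (2 * n) * (15 ^ n * Nat.card (Qn n)) := by
        simp [Fintype.card_sum, Fintype.card_prod]
        ring_nf

end Aux

/-- Almost all pairs of PBRs on `(Fin n, Fin n)` compose to the full PBR:
the proportion of pairs `(α,β)` with `β∘α = ω̄_n` tends to `1` as `n → ∞`. -/
theorem random_pbr_products_full :
    Filter.Tendsto (fun n : ℕ =>
      (Nat.card {q : PBR (Fin n) (Fin n) × PBR (Fin n) (Fin n) //
          comp q.2 q.1 = (Set.univ : PBR (Fin n) (Fin n))} : ℝ) /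
        (Nat.card (PBR (Fin n) (Fin n)) : ℝ) ^ 2)
      Filter.atTop (nhds 1) := by
  have hlim0 : Filter.Tendsto (fun n : ℕ => (n : ℝ) ^ 2 * (15 / 16 : ℝ) ^ n)
      Filter.atTop (nhds 0) :=
    tendsto_pow_const_mul_const_pow_of_lt_one 2 (by norm_num) (by norm_num)
  have hlo : Filter.Tendsto (fun n : ℕ => 1 - 4 * ((n : ℝ) ^ 2 * (15 / 16 : ℝ) ^ n))
      Filter.atTop (nhds 1) := by
    have := Filter.Tendsto.sub (tendsto_const_nhds (x := (1 : ℝ)))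
      (hlim0.const_mul 4)
    simpa using this
  refine tendsto_of_tendsto_of_tendsto_of_le_of_le hlo tendsto_const_nhds ?_ ?_
  · -- lower bound
    intro n
    show (1 : ℝ) - 4 * ((n : ℝ) ^ 2 * (15 / 16 : ℝ) ^ n) ≤
      (Nat.card {q : Qn n // comp q.2 q.1 = (Set.univ : PBR (Fin n) (Fin n))} : ℝ) /
        (Nat.card (PBR (Fin n) (Fin n)) : ℝ) ^ 2
    have hDpos : 0 < Nat.card (PBR (Fin n) (Fin n)) := Nat.card_pos
    have hD2 : (0 : ℝ) < (Nat.card (PBR (Fin n) (Fin n)) : ℝ) ^ 2 := by positivity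
    set D : ℝ := (Nat.card (PBR (Fin n) (Fin n)) : ℝ) with hDdef
    set G : ℕ := Nat.card {q : Qn n //
        comp q.2 q.1 = (Set.univ : PBR (Fin n) (Fin n))} with hGdef
    set B : ℕ := Nat.card {q : Qn n //
        ¬ comp q.2 q.1 = (Set.univ : PBR (Fin n) (Fin n))} with hBdef
    have hGB : G + B = Nat.card (Qn n) := card_add_card_compl _
    have hQ : (Nat.card (Qn n) : ℝ) = D ^ 2 := by
      rw [Nat.card_prod]; push_cast [hDdef, sq]; ring
    have hsum : (G : ℝ) + (B : ℝ) = D ^ 2 := by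
      rw [← hQ]; exact_mod_cast congrArg (Nat.cast (R := ℝ)) hGB
    have hBle : (B : ℝ) * 16 ^ n ≤ (2 * n) * (2 * n) * (15 ^ n * D ^ 2) := by
      have := card_bad_le (n := n)
      have h2 : ((2 * n) * (2 * n) * (15 ^ n * Nat.card (Qn n)) : ℕ) =
          (((2 * n) * (2 * n) * (15 ^ n * Nat.card (Qn n)) : ℕ) : ℝ) := rfl
      calc (B : ℝ) * 16 ^ n
          = ((B * 16 ^ n : ℕ) : ℝ) := by push_cast; ring
        _ ≤ (((2 * n) * (2 * n) * (15 ^ n * Nat.card (Qn n)) : ℕ) : ℝ) := by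
            exact_mod_cast this
        _ = (2 * n) * (2 * n) * (15 ^ n * D ^ 2) := by push_cast [hQ]; ring
    have hBfrac : (B : ℝ) / D ^ 2 ≤ 4 * ((n : ℝ) ^ 2 * (15 / 16 : ℝ) ^ n) := by
      rw [div_le_iff₀ hD2]
      have h16 : (0 : ℝ) < 16 ^ n := by positivity
      rw [show (4 : ℝ) * ((n : ℝ) ^ 2 * (15 / 16 : ℝ) ^ n) * D ^ 2 =
          ((2 * n) * (2 * n) * (15 ^ n * D ^ 2)) / 16 ^ n by
        rw [div_pow]; field_simp; ring, le_div_iff₀ h16]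
      exact hBle
    have hGD : (G : ℝ) / D ^ 2 = 1 - (B : ℝ) / D ^ 2 := by
      field_simp
      rw [eq_sub_iff_add_eq, ← add_div, hsum, div_self hD2.ne']
    rw [hGD]
    linarith
  · -- upper bound
    intro n
    show (Nat.card {q : Qn n // comp q.2 q.1 = (Set.univ : PBR (Fin n) (Fin n))} : ℝ) /
        (Nat.card (PBR (Fin n) (Fin n)) : ℝ) ^ 2 ≤ 1
    have hDpos : 0 < Nat.card (PBR (Fin n) (Fin n)) := Nat.card_pos
    have hD2 : (0 : ℝ) < (Nat.card (PBR (Fin n) (Fin n)) : ℝ) ^ 2 := by positivity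
    rw [div_le_one hD2]
    have hGB := card_add_card_compl (α := Qn n)
      (fun q => comp q.2 q.1 = (Set.univ : PBR (Fin n) (Fin n)))
    have hQ : (Nat.card (Qn n) : ℝ) = (Nat.card (PBR (Fin n) (Fin n)) : ℝ) ^ 2 := by
      rw [Nat.card_prod]; push_cast [sq]; ring
    have : (Nat.card {q : Qn n //
        comp q.2 q.1 = (Set.univ : PBR (Fin n) (Fin n))} : ℝ) ≤ (Nat.card (Qn n) : ℝ) := by
      exact_mod_cast Nat.le.intro hGB
    linarith [hQ ▸ this]


end PBRPaper
end
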